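/- Let N ≥ 2, R, l, d > 0 with d < l. Let A = Q_R'(0) × (d/2, l/2) and B = Q_R'(0) × (−l/2, −d/2) with Q_R'(0) = [−R/2, R/2]^{N−1}. Then G(A, B) ≤ R^{N−1} ω_{N−1} (2 ln((l+d)/2) − ln(l/2) − ln(d/2)), where G(A,B) = ∫_{A×B} |y−x|^{−(N+1)} d(x,y) and ω_{N−1} = ℋ^{N−1}(B₁'(0)). -/

import Mathlib

set_option maxHeartbeats 1000000

open MeasureTheory Set Filter
open scoped ENNReal

lemma sqrt_sq_add_sq_pos {r t : ℝ} (ht : 0 < t) : 0 < Real.sqrt (r ^ 2 + t ^ 2) :=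
  Real.sqrt_pos.2 (by positivity)

lemma hasDerivAt_u {t : ℝ} (ht : 0 < t) (r : ℝ) :
    HasDerivAt (fun r : ℝ => r / Real.sqrt (r ^ 2 + t ^ 2))
      (t ^ 2 / Real.sqrt (r ^ 2 + t ^ 2) ^ 3) r := by
  have hpos : 0 < r ^ 2 + t ^ 2 := by positivity
  have hs : HasDerivAt (fun r : ℝ => Real.sqrt (r ^ 2 + t ^ 2))
      (1 / (2 * Real.sqrt (r ^ 2 + t ^ 2)) * (2 * r)) r := by
    have h1 : HasDerivAt (fun r : ℝ => r ^ 2 + t ^ 2) (2 * r) r := by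
      simpa using ((hasDerivAt_pow 2 r).add_const (t ^ 2))
    exact (Real.hasDerivAt_sqrt hpos.ne').comp r h1
  have hd := (hasDerivAt_id r).div hs (sqrt_sq_add_sq_pos ht).ne'
  refine hd.congr_deriv ?_
  symm
  have hsq : Real.sqrt (r ^ 2 + t ^ 2) ^ 2 = r ^ 2 + t ^ 2 := Real.sq_sqrt hpos.le
  have hne := (sqrt_sq_add_sq_pos ht (r := r)).ne'
  simp only [id]
  field_simp
  linear_combination -hsq

lemma tendsto_u {t : ℝ} (ht : 0 < t) :
    Tendsto (fun r : ℝ => r / Real.sqrt (r ^ 2 + t ^ 2)) atTop (nhds 1) := by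
  have h0 : Tendsto (fun r : ℝ => 1 + (t / r) ^ 2) atTop (nhds 1) := by
    have h : Tendsto (fun r : ℝ => t / r) atTop (nhds 0) :=
      tendsto_const_nhds.div_atTop tendsto_id
    simpa using tendsto_const_nhds.add (h.pow 2)
  have h1 : Tendsto (fun r : ℝ => (Real.sqrt (1 + (t / r) ^ 2))⁻¹) atTop (nhds 1) := by
    have := (Real.continuous_sqrt.continuousAt.tendsto.comp h0).inv₀ (by simp)
    simpa using this
  refine h1.congr' ?_
  filter_upwards [eventually_gt_atTop (0:ℝ)] with r hr
  have hr' : r ≠ 0 := hr.ne'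
  have key : Real.sqrt (r ^ 2 + t ^ 2) = r * Real.sqrt (1 + (t / r) ^ 2) := by
    rw [← Real.sqrt_sq hr.le, ← Real.sqrt_mul (by positivity)]
    · congr 1
      field_simp
      exact Real.sq_sqrt (sq_nonneg r)
    
  rw [key, eq_comm]
  have hsp : 0 < Real.sqrt (1 + (t / r) ^ 2) := Real.sqrt_pos.2 (by positivity)
  field_simp

section
variable (n : ℕ) {t : ℝ}

private noncomputable def Faux (n : ℕ) (t : ℝ) : ℝ → ℝ :=
  fun r => (r / Real.sqrt (r ^ 2 + t ^ 2)) ^ (n + 1) / ((n + 1) * t ^ 2)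

lemma Faux_deriv (ht : 0 < t) : ∀ r ∈ Ioi (0:ℝ),
    HasDerivAt (Faux n t) (r ^ n * (Real.sqrt (r ^ 2 + t ^ 2) ^ (n + 3))⁻¹) r := by
  intro r _
  have hu := hasDerivAt_u ht r
  have hd := (hu.pow (n + 1)).div_const ((n + 1) * t ^ 2)
  refine hd.congr_deriv ?_
  symm
  have hne := (sqrt_sq_add_sq_pos ht (r := r)).ne'
  have ht2 : (t:ℝ) ^ 2 ≠ 0 := by positivity
  have hn1 : ((n:ℝ) + 1) ≠ 0 := by positivity
  rw [Nat.add_sub_cancel, div_pow, pow_add]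
  push_cast
  field_simp

lemma Faux_cont (ht : 0 < t) : ContinuousWithinAt (Faux n t) (Ici 0) 0 := by
  apply ContinuousAt.continuousWithinAt
  have : Continuous (Faux n t) := by
    apply Continuous.div_const
    apply Continuous.pow
    exact continuous_id.div (by fun_prop) (fun r => (sqrt_sq_add_sq_pos ht).ne')
  exact this.continuousAt

lemma Faux_nonneg : ∀ r ∈ Ioi (0:ℝ), 0 ≤ r ^ n * (Real.sqrt (r ^ 2 + t ^ 2) ^ (n + 3))⁻¹ := by
  intro r hr; have := le_of_lt (show (0:ℝ) < r from hr); positivity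

lemma Faux_tendsto (ht : 0 < t) :
    Tendsto (Faux n t) atTop (nhds (1 / ((n + 1) * t ^ 2))) := by
  have := ((tendsto_u ht).pow (n + 1)).div_const ((n + 1) * t ^ 2)
  rw [show Faux n t = fun r => (r / Real.sqrt (r ^ 2 + t ^ 2)) ^ (n + 1) / ((n + 1) * t ^ 2) from rfl]
  simpa using this

lemma radial1D_eq (ht : 0 < t) :
    (∫ r in Ioi (0:ℝ), r ^ n * (Real.sqrt (r ^ 2 + t ^ 2) ^ (n + 3))⁻¹)
      = 1 / ((n + 1) * t ^ 2) := by
  have := integral_Ioi_of_hasDerivAt_of_nonneg (Faux_cont n ht) (Faux_deriv n ht)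
    (Faux_nonneg n) (Faux_tendsto n ht)
  rw [this]
  simp [Faux]

lemma radial1D_int (ht : 0 < t) :
    IntegrableOn (fun r => r ^ n * (Real.sqrt (r ^ 2 + t ^ 2) ^ (n + 3))⁻¹) (Ioi (0:ℝ)) :=
  integrableOn_Ioi_deriv_of_nonneg (Faux_cont n ht) (Faux_deriv n ht)
    (Faux_nonneg n) (Faux_tendsto n ht)

end



lemma sqrt_norm_cont (n : ℕ) {t : ℝ} (ht : 0 < t) :
    Continuous (fun w : EuclideanSpace ℝ (Fin (n+1)) =>
      (Real.sqrt (‖w‖ ^ 2 + t ^ 2) ^ (n + 3))⁻¹) := by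
  apply Continuous.inv₀
  · fun_prop
  · intro w
    have : 0 < Real.sqrt (‖w‖ ^ 2 + t ^ 2) := Real.sqrt_pos.2 (by positivity)
    positivity

lemma ball_integrable (n : ℕ) {t : ℝ} (ht : 0 < t) :
    Integrable (fun w : EuclideanSpace ℝ (Fin (n+1)) =>
      (Real.sqrt (‖w‖ ^ 2 + t ^ 2) ^ (n + 3))⁻¹) := by
  set m := min t 1 with hm
  have hm0 : 0 < m := lt_min ht one_pos
  have hint : Integrable (fun x : EuclideanSpace ℝ (Fin (n+1)) =>
      (2 / m) ^ (n + 3) * (1 + ‖x‖) ^ (-((n : ℝ) + 3))) := by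
    apply Integrable.const_mul
    apply integrable_one_add_norm (μ := volume)
    rw [finrank_euclideanSpace_fin]
    push_cast; linarith
  refine hint.mono' ((sqrt_norm_cont n ht).aestronglyMeasurable) ?_
  refine Filter.Eventually.of_forall fun x => ?_
  have hx : (0:ℝ) ≤ ‖x‖ := norm_nonneg x
  have hs0 : 0 < Real.sqrt (‖x‖ ^ 2 + t ^ 2) := Real.sqrt_pos.2 (by positivity)
  have hxle : ‖x‖ ≤ Real.sqrt (‖x‖ ^ 2 + t ^ 2) :=
    (Real.le_sqrt hx (by positivity)).2 (by nlinarith)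
  have htle : t ≤ Real.sqrt (‖x‖ ^ 2 + t ^ 2) :=
    (Real.le_sqrt ht.le (by positivity)).2 (by nlinarith)
  have hs : m / 2 * (1 + ‖x‖) ≤ Real.sqrt (‖x‖ ^ 2 + t ^ 2) := by
    have h1 : m ≤ t := min_le_left _ _
    have h2 : m ≤ 1 := min_le_right _ _
    nlinarith
  have h2 : (m / 2) ^ (n + 3) * (1 + ‖x‖) ^ (n + 3)
      ≤ Real.sqrt (‖x‖ ^ 2 + t ^ 2) ^ (n + 3) := by
    rw [← mul_pow]; exact pow_le_pow_left₀ (by positivity) hs _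
  have hrw : (1 + ‖x‖) ^ (-((n : ℝ) + 3)) = ((1 + ‖x‖) ^ (n + 3))⁻¹ := by
    rw [show -((n:ℝ)+3) = -((n+3 : ℕ) : ℝ) by push_cast; ring,
      Real.rpow_neg (by positivity), Real.rpow_natCast]
  rw [Real.norm_eq_abs, abs_of_nonneg (by positivity), hrw]
  have hrw2 : (2/m)^(n+3) * (((1+‖x‖):ℝ)^(n+3))⁻¹ = ((m/2)^(n+3) * (1+‖x‖)^(n+3))⁻¹ := by
    rw [mul_inv, ← inv_pow, ← inv_pow]
    congr 2
    rw [inv_div]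
  rw [hrw2]
  exact inv_anti₀ (by positivity) h2

lemma ball_integral (n : ℕ) {t : ℝ} (ht : 0 < t) :
    (∫ w : EuclideanSpace ℝ (Fin (n+1)), (Real.sqrt (‖w‖ ^ 2 + t ^ 2) ^ (n + 3))⁻¹)
      = (volume (Metric.ball (0 : EuclideanSpace ℝ (Fin (n+1))) 1)).toReal / t ^ 2 := by
  have := integral_fun_norm_addHaar (volume : Measure (EuclideanSpace ℝ (Fin (n+1))))
    (fun y : ℝ => (Real.sqrt (y ^ 2 + t ^ 2) ^ (n + 3))⁻¹)
  rw [finrank_euclideanSpace_fin] at this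
  rw [this]
  simp only [smul_eq_mul, nsmul_eq_mul, Nat.add_sub_cancel, measureReal_def]
  rw [show (∫ y in Ioi (0:ℝ), y ^ n * (Real.sqrt (y ^ 2 + t ^ 2) ^ (n + 3))⁻¹)
      = 1 / ((n + 1) * t ^ 2) from radial1D_eq n ht]
  have ht2 : (t:ℝ) ^ 2 ≠ 0 := by positivity
  have hn1 : ((n:ℝ) + 1) ≠ 0 := by positivity
  push_cast
  field_simp

lemma ball_lintegral (n : ℕ) {t : ℝ} (ht : 0 < t) (v : EuclideanSpace ℝ (Fin (n+1))) :
    (∫⁻ w : EuclideanSpace ℝ (Fin (n+1)),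
        ENNReal.ofReal ((Real.sqrt (‖w - v‖ ^ 2 + t ^ 2) ^ (n + 3))⁻¹))
      = ENNReal.ofReal
          ((volume (Metric.ball (0 : EuclideanSpace ℝ (Fin (n+1))) 1)).toReal / t ^ 2) := by
  have htr : (∫⁻ w : EuclideanSpace ℝ (Fin (n+1)),
      ENNReal.ofReal ((Real.sqrt (‖w - v‖ ^ 2 + t ^ 2) ^ (n + 3))⁻¹))
      = ∫⁻ w : EuclideanSpace ℝ (Fin (n+1)),
        ENNReal.ofReal ((Real.sqrt (‖w‖ ^ 2 + t ^ 2) ^ (n + 3))⁻¹) := by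
    have := lintegral_add_right_eq_self (μ := (volume : Measure (EuclideanSpace ℝ (Fin (n+1)))))
      (fun w : EuclideanSpace ℝ (Fin (n+1)) =>
        ENNReal.ofReal ((Real.sqrt (‖w‖ ^ 2 + t ^ 2) ^ (n + 3))⁻¹)) (-v)
    simpa [sub_eq_add_neg] using this
  rw [htr, ← ofReal_integral_eq_lintegral_ofReal (ball_integrable n ht)
    (Filter.Eventually.of_forall fun w => by positivity), ball_integral n ht]

lemma vertC {d l t : ℝ} (hd : 0 < d) (hdl : d < l) (ht : d / 2 < t) :
    (∫ s in Ioo (-l/2) (-d/2), ((t - s) ^ 2)⁻¹) = (t + d/2)⁻¹ - (t + l/2)⁻¹ := by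
  have hab : (-l/2 : ℝ) ≤ -d/2 := by linarith
  have key : ∀ s ∈ uIcc (-l/2 : ℝ) (-d/2), HasDerivAt (fun s => (t - s)⁻¹) (((t - s) ^ 2)⁻¹) s := by
    intro s hs
    rw [uIcc_of_le hab] at hs
    have hts : t - s ≠ 0 := by
      have := hs.2; have : s ≤ -d/2 := hs.2; nlinarith [hs.1]
    have h1 : HasDerivAt (fun s : ℝ => t - s) (-1) s := by
      simpa using (hasDerivAt_id s).const_sub t
    have := h1.inv hts
    refine this.congr_deriv ?_
    field_simp
  have hcont : IntervalIntegrable (fun s => ((t - s) ^ 2)⁻¹) volume (-l/2) (-d/2) := by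
    apply ContinuousOn.intervalIntegrable
    apply ContinuousOn.inv₀
    · fun_prop
    · intro s hs
      rw [uIcc_of_le hab] at hs
      have : s ≤ -d/2 := hs.2
      have : t - s ≠ 0 := by nlinarith
      positivity
  have := intervalIntegral.integral_eq_sub_of_hasDerivAt key hcont
  rw [intervalIntegral.integral_of_le hab, integral_Ioc_eq_integral_Ioo] at this
  rw [this]
  ring_nf

lemma vertD {d l : ℝ} (hd : 0 < d) (hdl : d < l) :
    (∫ t in Ioo (d/2) (l/2), ((t + d/2)⁻¹ - (t + l/2)⁻¹))
      = 2 * Real.log ((l + d) / 2) - Real.log l - Real.log d := by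
  have hab : (d/2 : ℝ) ≤ l/2 := by linarith
  have key : ∀ t ∈ uIcc (d/2 : ℝ) (l/2),
      HasDerivAt (fun t => Real.log (t + d/2) - Real.log (t + l/2))
        ((t + d/2)⁻¹ - (t + l/2)⁻¹) t := by
    intro t ht
    rw [uIcc_of_le hab] at ht
    have h1 : (0:ℝ) < t + d/2 := by nlinarith [ht.1]
    have h2 : (0:ℝ) < t + l/2 := by nlinarith [ht.1]
    have hd1 : HasDerivAt (fun t : ℝ => t + d/2) 1 t := by simpa using (hasDerivAt_id t).add_const (d/2)
    have hd2 : HasDerivAt (fun t : ℝ => t + l/2) 1 t := by simpa using (hasDerivAt_id t).add_const (l/2)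
    have g1 := (Real.hasDerivAt_log h1.ne').comp t hd1
    have g2 := (Real.hasDerivAt_log h2.ne').comp t hd2
    exact (g1.sub g2).congr_deriv (by ring)
  have hcont : IntervalIntegrable (fun t => ((t + d/2)⁻¹ - (t + l/2)⁻¹)) volume (d/2) (l/2) := by
    apply ContinuousOn.intervalIntegrable
    apply ContinuousOn.sub
    · apply ContinuousOn.inv₀ (by fun_prop)
      intro t ht; rw [uIcc_of_le hab] at ht; nlinarith [ht.1]
    · apply ContinuousOn.inv₀ (by fun_prop)
      intro t ht; rw [uIcc_of_le hab] at ht; nlinarith [ht.1]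
  have := intervalIntegral.integral_eq_sub_of_hasDerivAt key hcont
  rw [intervalIntegral.integral_of_le hab, integral_Ioc_eq_integral_Ioo] at this
  rw [this]
  have e1 : (l/2 + d/2 : ℝ) = (l + d)/2 := by ring
  have e2 : (l/2 + l/2 : ℝ) = l := by ring
  have e3 : (d/2 + d/2 : ℝ) = d := by ring
  have e4 : (d/2 + l/2 : ℝ) = (l + d)/2 := by ring
  rw [e1, e2, e3, e4]
  ring

lemma cube_volume (n : ℕ) {R : ℝ} (hR : 0 < R) :
    volume {v : EuclideanSpace ℝ (Fin (n+1)) | ∀ i, |v i| ≤ R / 2}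
      = ENNReal.ofReal (R ^ (n+1)) := by
  have hset : {v : EuclideanSpace ℝ (Fin (n+1)) | ∀ i, |v i| ≤ R / 2}
      = ((MeasurableEquiv.toLp 2 (Fin (n+1) → ℝ)).symm) ⁻¹'
        (univ.pi fun _ : Fin (n+1) => Icc (-(R/2)) (R/2)) := by
    ext v
    simp only [mem_setOf_eq, mem_preimage, Set.mem_pi, mem_univ, forall_true_left, mem_Icc,
      true_implies]
    have heq : ∀ i, ((MeasurableEquiv.toLp 2 (Fin (n+1) → ℝ)).symm) v i = v i := fun _ => rfl
    constructor
    · intro h i; rw [heq]; exact abs_le.1 (h i)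
    · intro h i; exact abs_le.2 (by rw [← heq i]; exact h i)
  rw [hset, (EuclideanSpace.volume_preserving_symm_measurableEquiv_toLp (Fin (n+1))).measure_preimage
    ((MeasurableSet.univ_pi fun _ => measurableSet_Icc).nullMeasurableSet)]
  rw [volume_pi_pi]
  simp only [Real.volume_Icc]
  rw [Finset.prod_const]
  rw [show (R/2 - -(R/2) : ℝ) = R by ring]
  rw [← ENNReal.ofReal_pow hR.le]
  simp

noncomputable def splitEquiv (n : ℕ) :
    EuclideanSpace ℝ (Fin (n+2)) ≃ᵐ ℝ × EuclideanSpace ℝ (Fin (n+1)) :=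
  ((MeasurableEquiv.toLp 2 (Fin (n+2) → ℝ)).symm).trans
    ((MeasurableEquiv.piFinSuccAbove (fun _ : Fin (n+2) => ℝ) (Fin.last (n+1))).trans
      ((MeasurableEquiv.refl ℝ).prodCongr
        ((MeasurableEquiv.toLp 2 (Fin (n+1) → ℝ)).symm).symm))

lemma splitEquiv_apply (n : ℕ) (x : EuclideanSpace ℝ (Fin (n+2))) :
    splitEquiv n x = (x (Fin.last (n+1)), WithLp.toLp 2 (fun i : Fin (n+1) => x i.castSucc)) := by
  ext
  · rfl
  · show x (Fin.succAbove (Fin.last (n+1)) _) = _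
    rw [Fin.succAbove_last]

lemma euclid_norm_sub {k : ℕ} (a b : EuclideanSpace ℝ (Fin k)) :
    ‖a - b‖ = Real.sqrt (∑ i, (a i - b i) ^ 2) := by
  rw [EuclideanSpace.norm_eq]
  congr 1
  refine Finset.sum_congr rfl fun i _ => ?_
  simp [PiLp.sub_apply, Real.norm_eq_abs, sq_abs]

lemma euclid_normsq_sub {k : ℕ} (a b : EuclideanSpace ℝ (Fin k)) :
    ‖a - b‖ ^ 2 = ∑ i, (a i - b i) ^ 2 := by
  rw [euclid_norm_sub, Real.sq_sqrt (by positivity)]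

lemma norm_split (n : ℕ) (x y : EuclideanSpace ℝ (Fin (n+2))) :
    ‖y - x‖ = Real.sqrt
      (‖(splitEquiv n y).2 - (splitEquiv n x).2‖ ^ 2 + ((splitEquiv n y).1 - (splitEquiv n x).1) ^ 2) := by
  rw [splitEquiv_apply, splitEquiv_apply]
  simp only
  rw [euclid_norm_sub, euclid_normsq_sub]
  rw [Fin.sum_univ_castSucc]

lemma prodCongr_coe {α β γ δ : Type*} [MeasurableSpace α] [MeasurableSpace β]
    [MeasurableSpace γ] [MeasurableSpace δ] (ab : α ≃ᵐ β) (cd : γ ≃ᵐ δ) :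
    ⇑(ab.prodCongr cd) = Prod.map ⇑ab ⇑cd := rfl

lemma splitEquiv_preserving (n : ℕ) :
    MeasurePreserving (splitEquiv n) volume ((volume : Measure ℝ).prod volume) := by
  have h1 := EuclideanSpace.volume_preserving_symm_measurableEquiv_toLp (Fin (n+2))
  have h2 := volume_preserving_piFinSuccAbove (fun _ : Fin (n+2) => ℝ) (Fin.last (n+1))
  have h3 := (EuclideanSpace.volume_preserving_symm_measurableEquiv_toLp (Fin (n+1))).symm
    ((MeasurableEquiv.toLp 2 (Fin (n+1) → ℝ)).symm)
  have h4 : MeasurePreserving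
      (⇑((MeasurableEquiv.refl ℝ).prodCongr ((MeasurableEquiv.toLp 2 (Fin (n+1) → ℝ)).symm).symm))
      ((volume : Measure ℝ).prod volume) ((volume : Measure ℝ).prod volume) := by
    rw [prodCongr_coe]
    exact (MeasurePreserving.id _).prod h3
  exact (h4.comp (h2.comp h1) : _)

/-- Upper bound of `G` for two coaxial boxes `Q_R'(0) × (d/2,l/2)` and `Q_R'(0) × (−l/2,−d/2)`,
in `ℝ^N`, `N = n+2 ≥ 2`:
`G(A,B) ≤ R^{N−1} ω_{N−1} (2 ln((l+d)/2) − ln(l/2) − ln(d/2))`. -/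
theorem stmt_15 (n : ℕ) (d l R : ℝ) (hd : 0 < d) (hdl : d < l) (hR : 0 < R)
    (A B : Set (EuclideanSpace ℝ (Fin (n + 2))))
    (hA : A = {x | (∀ i : Fin (n + 1), |x i.castSucc| ≤ R / 2)
      ∧ x (Fin.last (n + 1)) ∈ Set.Ioo (d / 2) (l / 2)})
    (hB : B = {x | (∀ i : Fin (n + 1), |x i.castSucc| ≤ R / 2) ∧ x (Fin.last (n + 1)) ∈ Set.Ioo (-l / 2) (-d / 2)})
    (ω : ℝ) (hω : ω = (volume (Metric.ball (0 : EuclideanSpace ℝ (Fin (n + 1))) 1)).toReal) :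
    (∫⁻ x in A, ∫⁻ y in B, ENNReal.ofReal (1 / ‖y - x‖ ^ (n + 3))) ≤
      ENNReal.ofReal (R ^ (n + 1) * ω *
        (2 * Real.log ((l + d) / 2) - Real.log (l / 2) - Real.log (d / 2))) := by
  have hω0 : 0 ≤ ω := hω ▸ ENNReal.toReal_nonneg
  have hMP := splitEquiv_preserving n
  have hΦemb := (splitEquiv n).measurableEmbedding
  set Q : Set (EuclideanSpace ℝ (Fin (n+1))) := {v | ∀ i, |v i| ≤ R / 2} with hQdef
  have hmQ : MeasurableSet Q := by
    have : Q = ⋂ i : Fin (n+1), {v : EuclideanSpace ℝ (Fin (n+1)) | |v i| ≤ R / 2} := by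
      ext v; simp [hQdef, mem_iInter]
    rw [this]
    refine MeasurableSet.iInter fun i => ?_
    have hm : Measurable fun v : EuclideanSpace ℝ (Fin (n+1)) => v i :=
      (measurable_pi_apply i).comp ((MeasurableEquiv.toLp 2 (Fin (n+1) → ℝ)).symm).measurable
    exact measurableSet_le hm.abs measurable_const
  have hA' : A = (splitEquiv n) ⁻¹' (Ioo (d/2) (l/2) ×ˢ Q) := by
    ext x
    rw [hA]
    simp only [mem_setOf_eq, mem_preimage, splitEquiv_apply, mem_prod, mem_Ioo]
    constructor
    · rintro ⟨h1, h2⟩; exact ⟨h2, h1⟩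
    · rintro ⟨h2, h1⟩; exact ⟨h1, h2⟩
  have hB' : B ⊆ (splitEquiv n) ⁻¹' (Ioo (-l/2) (-d/2) ×ˢ (univ : Set (EuclideanSpace ℝ (Fin (n+1))))) := by
    intro x hx
    rw [hB] at hx
    simp only [mem_preimage, splitEquiv_apply, mem_prod, mem_univ, and_true]
    exact hx.2
  have hmA : MeasurableSet A := by
    rw [hA']; exact (splitEquiv n).measurable (measurableSet_Ioo.prod hmQ)
  have hfst : ∀ x, ((splitEquiv n) x).1 = x (Fin.last (n+1)) := fun x => by rw [splitEquiv_apply]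
  -- inner bound
  have hinner : ∀ x ∈ A, (∫⁻ y in B, ENNReal.ofReal (1 / ‖y - x‖ ^ (n + 3)))
      ≤ ENNReal.ofReal (ω * ((x (Fin.last (n+1)) + d/2)⁻¹ - (x (Fin.last (n+1)) + l/2)⁻¹)) := by
    intro x hxA
    set t : ℝ := x (Fin.last (n+1)) with htdef
    set v0 : EuclideanSpace ℝ (Fin (n+1)) := ((splitEquiv n) x).2 with hv0
    have htd : d/2 < t := by
      rw [hA] at hxA; exact hxA.2.1
    set g : ℝ × EuclideanSpace ℝ (Fin (n+1)) → ℝ≥0∞ := fun p =>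
      ENNReal.ofReal ((Real.sqrt (‖p.2 - v0‖ ^ 2 + (p.1 - ((splitEquiv n) x).1) ^ 2) ^ (n + 3))⁻¹) with hg
    have hgmeas : Measurable g := by
      apply Measurable.ennreal_ofReal
      apply Measurable.inv
      apply Continuous.measurable
      apply Continuous.pow
      exact Real.continuous_sqrt.comp (by fun_prop)
    have hrw : ∀ y, ENNReal.ofReal (1 / ‖y - x‖ ^ (n + 3)) = g ((splitEquiv n) y) := by
      intro y
      rw [one_div, norm_split n x y]
    calc (∫⁻ y in B, ENNReal.ofReal (1 / ‖y - x‖ ^ (n + 3)))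
        ≤ ∫⁻ y in (splitEquiv n) ⁻¹' (Ioo (-l/2) (-d/2) ×ˢ univ), ENNReal.ofReal (1 / ‖y - x‖ ^ (n + 3)) :=
          lintegral_mono_set hB'
      _ = ∫⁻ p in Ioo (-l/2) (-d/2) ×ˢ univ, g p := by
          simp_rw [hrw]
          exact hMP.setLIntegral_comp_preimage_emb hΦemb g _
      _ = ∫⁻ s in Ioo (-l/2) (-d/2), ∫⁻ w, g (s, w) := by
          rw [Measure.volume_eq_prod, ← Measure.prod_restrict, Measure.restrict_univ]
          exact lintegral_prod g hgmeas.aemeasurable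
      _ = ∫⁻ s in Ioo (-l/2) (-d/2), ENNReal.ofReal (ω / (t - s) ^ 2) := by
          refine setLIntegral_congr_fun measurableSet_Ioo (fun s hs => ?_)
          have hts : 0 < t - s := by
            have : s < -d/2 := hs.2
            nlinarith
          have hptw : ∀ w : EuclideanSpace ℝ (Fin (n+1)), g (s, w)
              = ENNReal.ofReal ((Real.sqrt (‖w - v0‖ ^ 2 + (t - s) ^ 2) ^ (n + 3))⁻¹) := by
            intro w
            rw [hg]
            have hsq : (s - (splitEquiv n x).1) ^ 2 = (t - s) ^ 2 := by
              rw [hfst x, ← htdef]; ring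
            simp only [hsq]
          rw [lintegral_congr hptw, ball_lintegral n hts v0, hω]
      _ = ENNReal.ofReal (ω * ((t + d/2)⁻¹ - (t + l/2)⁻¹)) := by
          have hint : IntegrableOn (fun s => ω / (t - s) ^ 2) (Ioo (-l/2) (-d/2)) := by
            apply IntegrableOn.mono_set (t := Icc (-l/2) (-d/2)) _ Ioo_subset_Icc_self
            apply ContinuousOn.integrableOn_Icc
            apply ContinuousOn.div continuousOn_const (by fun_prop)
            intro s hs
            have : s ≤ -d/2 := hs.2
            have : 0 < t - s := by nlinarith
            positivity
          rw [← ofReal_integral_eq_lintegral_ofReal hint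
            (ae_of_all _ fun s => div_nonneg hω0 (sq_nonneg _))]
          congr 1
          rw [show (fun s => ω / (t - s) ^ 2) = (fun s => ω * ((t - s) ^ 2)⁻¹) from
            funext fun s => by rw [div_eq_mul_inv]]
          rw [integral_const_mul, vertC hd hdl htd]
  -- outer estimate
  set H : ℝ × EuclideanSpace ℝ (Fin (n+1)) → ℝ≥0∞ := fun p =>
    ENNReal.ofReal (ω * ((p.1 + d/2)⁻¹ - (p.1 + l/2)⁻¹)) with hH
  have hHmeas : Measurable H := by
    apply Measurable.ennreal_ofReal
    exact (((measurable_fst.add_const (d/2)).inv.sub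
      ((measurable_fst.add_const (l/2)).inv)).const_mul ω)
  have hHrw : ∀ x, ENNReal.ofReal (ω * ((x (Fin.last (n+1)) + d/2)⁻¹ - (x (Fin.last (n+1)) + l/2)⁻¹))
      = H ((splitEquiv n) x) := fun x => by rw [hH]; simp only [hfst x]
  calc (∫⁻ x in A, ∫⁻ y in B, ENNReal.ofReal (1 / ‖y - x‖ ^ (n + 3)))
      ≤ ∫⁻ x in A, ENNReal.ofReal
          (ω * ((x (Fin.last (n+1)) + d/2)⁻¹ - (x (Fin.last (n+1)) + l/2)⁻¹)) :=
        setLIntegral_mono' hmA hinner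
    _ = ∫⁻ p in Ioo (d/2) (l/2) ×ˢ Q, H p := by
        simp_rw [hHrw]
        rw [hA']
        exact hMP.setLIntegral_comp_preimage_emb hΦemb H _
    _ = ∫⁻ τ in Ioo (d/2) (l/2), ∫⁻ v in Q, H (τ, v) := by
        rw [Measure.volume_eq_prod, ← Measure.prod_restrict]
        rw [lintegral_prod H hHmeas.aemeasurable]
    _ = ∫⁻ τ in Ioo (d/2) (l/2),
          ENNReal.ofReal (ω * ((τ + d/2)⁻¹ - (τ + l/2)⁻¹)) * ENNReal.ofReal (R ^ (n+1)) := by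
        refine setLIntegral_congr_fun measurableSet_Ioo (fun τ hτ => ?_)
        simp only [hH]
        rw [setLIntegral_const, cube_volume n hR]
    _ = (∫⁻ τ in Ioo (d/2) (l/2), ENNReal.ofReal (ω * ((τ + d/2)⁻¹ - (τ + l/2)⁻¹)))
          * ENNReal.ofReal (R ^ (n+1)) := by
        rw [lintegral_mul_const]
        exact (((measurable_id.add_const (d/2)).inv.sub
          ((measurable_id.add_const (l/2)).inv)).const_mul ω).ennreal_ofReal
    _ = ENNReal.ofReal (ω * (2 * Real.log ((l + d) / 2) - Real.log l - Real.log d))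
          * ENNReal.ofReal (R ^ (n+1)) := by
        congr 1
        have hint : IntegrableOn (fun τ => ω * ((τ + d/2)⁻¹ - (τ + l/2)⁻¹)) (Ioo (d/2) (l/2)) := by
          apply IntegrableOn.mono_set (t := Icc (d/2) (l/2)) _ Ioo_subset_Icc_self
          apply ContinuousOn.integrableOn_Icc
          apply ContinuousOn.mul continuousOn_const
          apply ContinuousOn.sub
          · exact ContinuousOn.inv₀ (by fun_prop) (fun τ hτ => by nlinarith [hτ.1, hd])
          · exact ContinuousOn.inv₀ (by fun_prop) (fun τ hτ => by nlinarith [hτ.1, hd, hdl])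
        have hnn : 0 ≤ᵐ[volume.restrict (Ioo (d/2) (l/2))]
            fun τ => ω * ((τ + d/2)⁻¹ - (τ + l/2)⁻¹) := by
          refine (ae_restrict_iff' measurableSet_Ioo).2 (ae_of_all _ fun τ hτ => ?_)
          have h1 : (0:ℝ) < τ + d/2 := by nlinarith [hτ.1, hd]
          have h2 : (τ:ℝ) + d/2 ≤ τ + l/2 := by linarith
          have := inv_anti₀ h1 h2
          exact mul_nonneg hω0 (by linarith)
        rw [← ofReal_integral_eq_lintegral_ofReal hint hnn, integral_const_mul,
          vertD hd hdl]
    _ ≤ ENNReal.ofReal (R ^ (n + 1) * ω *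
          (2 * Real.log ((l + d) / 2) - Real.log (l / 2) - Real.log (d / 2))) := by
        have hl0 : (0:ℝ) < l := lt_trans hd hdl
        have hX0 : 0 ≤ ω * (2 * Real.log ((l + d) / 2) - Real.log l - Real.log d) := by
          refine mul_nonneg hω0 ?_
          have h1 : Real.log l + Real.log d = Real.log (l * d) :=
            (Real.log_mul hl0.ne' hd.ne').symm
          have h2 : (2:ℝ) * Real.log ((l+d)/2) = Real.log (((l+d)/2)^2) := by
            rw [Real.log_pow]; push_cast; ring
          have h3 : l * d ≤ ((l+d)/2)^2 := by nlinarith [sq_nonneg (l - d)]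
          have h4 : Real.log (l*d) ≤ Real.log (((l+d)/2)^2) :=
            Real.log_le_log (by positivity) h3
          linarith
        rw [← ENNReal.ofReal_mul hX0]
        apply ENNReal.ofReal_le_ofReal
        have hlog2 : (0:ℝ) ≤ Real.log 2 := Real.log_nonneg (by norm_num)
        have hl2 : Real.log (l / 2) = Real.log l - Real.log 2 :=
          Real.log_div (by linarith) (by norm_num)
        have hd2 : Real.log (d / 2) = Real.log d - Real.log 2 :=
          Real.log_div hd.ne' (by norm_num)
        have hX : (2 * Real.log ((l + d) / 2) - Real.log l - Real.log d)
            ≤ (2 * Real.log ((l + d) / 2) - Real.log (l / 2) - Real.log (d / 2)) := by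
          rw [hl2, hd2]; linarith
        have hRn : (0:ℝ) ≤ R ^ (n+1) := by positivity
        nlinarith [mul_le_mul_of_nonneg_left hX (mul_nonneg hRn hω0)]
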